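/- Let m ≥ 1 and k ≥ 1 be integers, let V, W ⊆ ℝ^m_+ be open in ℝ^m_+, and let φ : V → W be a bijection such that both φ and φ⁻¹ are C^k-maps, i.e. there exist an open set Ṽ ⊆ ℝ^m and a C^k map φ̃ : Ṽ → ℝ^m with Ṽ ∩ ℝ^m_+ = V and φ̃ = φ on V, and analogously for φ⁻¹. Then: (1) φ(∂V) = ∂W; (2) for every such C^k extension φ̃ of φ and every y ∈ ∂V one has Dφ̃(y)(ℝ^m_+) ⊆ ℝ^m_+. -/

import Mathlib

open Set Filter Topology

private lemma half_not_nhds {m : ℕ} [NeZero m] {y : EuclideanSpace ℝ (Fin m)} (hy : y 0 = 0)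
    (h : {x : EuclideanSpace ℝ (Fin m) | 0 ≤ x 0} ∈ 𝓝 y) : False := by
  set c : ℝ → EuclideanSpace ℝ (Fin m) :=
    fun t => y + t • EuclideanSpace.single (0 : Fin m) (1 : ℝ) with hc
  have hcont : Continuous c := by continuity
  have hc0 : c 0 = y := by simp [hc]
  have htend : Tendsto c (𝓝[<] (0 : ℝ)) (𝓝 y) := by
    have := (hcont.tendsto 0).mono_left (nhdsWithin_le_nhds (s := Iio (0:ℝ)))
    rwa [hc0] at this
  have hev : ∀ᶠ t in 𝓝[<] (0:ℝ), 0 ≤ c t 0 := htend.eventually h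
  have hev2 : ∀ᶠ t in 𝓝[<] (0:ℝ), t < 0 := eventually_mem_nhdsWithin
  obtain ⟨t, h1, h2⟩ := (hev.and hev2).exists
  have : c t 0 = t := by simp [hc, PiLp.add_apply, PiLp.smul_apply, hy]
  rw [this] at h1
  exact absurd h1 (not_le.2 h2)

private lemma bdry_to_bdry {m k : ℕ} [NeZero m] (hk : 1 ≤ k)
    {V W : Set (EuclideanSpace ℝ (Fin m))}
    {f g : EuclideanSpace ℝ (Fin m) → EuclideanSpace ℝ (Fin m)}
    (hfW : Set.MapsTo f V W) (hgV : Set.MapsTo g W V)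
    (hinv : ∀ u ∈ W, f (g u) = u)
    {Vt : Set (EuclideanSpace ℝ (Fin m))}
    {ft : EuclideanSpace ℝ (Fin m) → EuclideanSpace ℝ (Fin m)}
    (hVt : IsOpen Vt) (hVeq : Vt ∩ {x : EuclideanSpace ℝ (Fin m) | 0 ≤ x 0} = V)
    (hft : ContDiffOn ℝ k ft Vt) (hfeq : Set.EqOn ft f V)
    {Wt : Set (EuclideanSpace ℝ (Fin m))}
    {gt : EuclideanSpace ℝ (Fin m) → EuclideanSpace ℝ (Fin m)}
    (hWt : IsOpen Wt) (hWeq : Wt ∩ {x : EuclideanSpace ℝ (Fin m) | 0 ≤ x 0} = W)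
    (hgt : ContDiffOn ℝ k gt Wt) (hgeq : Set.EqOn gt g W)
    {y : EuclideanSpace ℝ (Fin m)} (hy : y ∈ V) (hy0 : y 0 = 0) (hgy : g (f y) = y) :
    f y 0 = 0 := by
  have hk' : (1 : WithTop ℕ∞) ≤ (k : WithTop ℕ∞) := by exact_mod_cast hk
  set z := f y with hzdef
  have hz : z ∈ W := hfW hy
  have hzWt : z ∈ Wt := by rw [← hWeq] at hz; exact hz.1
  have hz0 : 0 ≤ z 0 := by rw [← hWeq] at hz; exact hz.2
  by_contra hne
  have hzpos : 0 < z 0 := lt_of_le_of_ne hz0 (Ne.symm hne)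
  -- the open set U around z contained in W
  set U : Set (EuclideanSpace ℝ (Fin m)) := Wt ∩ {x | 0 < x 0} with hUdef
  have hUopen : IsOpen U :=
    hWt.inter (isOpen_lt continuous_const (EuclideanSpace.proj (0 : Fin m)).continuous)
  have hzU : z ∈ U := ⟨hzWt, hzpos⟩
  have hUW : U ⊆ W := by
    rw [← hWeq]; exact fun x hx => ⟨hx.1, show (0:ℝ) ≤ x 0 from le_of_lt hx.2⟩
  have hUnhds : U ∈ 𝓝 z := hUopen.mem_nhds hzU
  have hgz : gt z = y := by rw [hgeq hz, hzdef, hgy]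
  have hyVt : y ∈ Vt := by rw [← hVeq] at hy; exact hy.1
  have hgdiff : DifferentiableAt ℝ gt z :=
    ((hgt.contDiffAt (hWt.mem_nhds hzWt)).differentiableAt (zero_lt_one.trans_le hk').ne')
  have hfdiff : DifferentiableAt ℝ ft y :=
    ((hft.contDiffAt (hVt.mem_nhds hyVt)).differentiableAt (zero_lt_one.trans_le hk').ne')
  have heq : (ft ∘ gt) =ᶠ[𝓝 z] id := by
    filter_upwards [hUnhds] with u hu
    have huW : u ∈ W := hUW hu
    simp only [Function.comp_apply, id_eq]
    rw [hgeq huW, hfeq (hgV huW), hinv u huW]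
  have hcomp : (fderiv ℝ ft y).comp (fderiv ℝ gt z) = ContinuousLinearMap.id ℝ _ := by
    have h1 : fderiv ℝ (ft ∘ gt) z = (fderiv ℝ ft (gt z)).comp (fderiv ℝ gt z) := by
      rw [fderiv_comp z (by rwa [hgz]) hgdiff]
    rw [hgz] at h1
    rw [← h1, heq.fderiv_eq, fderiv_id]
  have hBinj : Function.Injective (fderiv ℝ gt z) := by
    have hidinj : Function.Injective ⇑((fderiv ℝ ft y).comp (fderiv ℝ gt z)) := by
      rw [hcomp]; intro a b h; simpa using h
    rw [ContinuousLinearMap.coe_comp'] at hidinj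
    exact Function.Injective.of_comp hidinj
  set B' : EuclideanSpace ℝ (Fin m) ≃L[ℝ] EuclideanSpace ℝ (Fin m) :=
    (LinearEquiv.ofInjectiveEndo ((fderiv ℝ gt z) : _ →ₗ[ℝ] _) hBinj).toContinuousLinearEquiv
  have hB'coe : (B' : EuclideanSpace ℝ (Fin m) →L[ℝ] EuclideanSpace ℝ (Fin m)) = fderiv ℝ gt z := by
    ext x
    simp [B', LinearEquiv.coe_ofInjectiveEndo]
  have hstrict : HasStrictFDerivAt gt
      (B' : EuclideanSpace ℝ (Fin m) →L[ℝ] EuclideanSpace ℝ (Fin m)) z := by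
    rw [hB'coe]
    exact (hgt.contDiffAt (hWt.mem_nhds hzWt)).hasStrictFDerivAt (zero_lt_one.trans_le hk').ne'
  have hmap : Filter.map gt (𝓝 z) = 𝓝 y := by
    rw [hstrict.map_nhds_eq_of_equiv, hgz]
  have hhalf : {x : EuclideanSpace ℝ (Fin m) | 0 ≤ x 0} ∈ 𝓝 y := by
    rw [← hmap, mem_map]
    filter_upwards [hUnhds] with u hu
    have huW : u ∈ W := hUW hu
    have : gt u ∈ V := by rw [hgeq huW]; exact hgV huW
    rw [← hVeq] at this
    exact this.2
  exact half_not_nhds hy0 hhalf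


theorem stmt_6
    (m k : ℕ) [NeZero m] (hm : 1 ≤ m) (hk : 1 ≤ k)
    (V W : Set (EuclideanSpace ℝ (Fin m)))
    (hV : ∃ Vt : Set (EuclideanSpace ℝ (Fin m)), IsOpen Vt ∧
      Vt ∩ {y : EuclideanSpace ℝ (Fin m) | 0 ≤ y 0} = V)
    (hW : ∃ Wt : Set (EuclideanSpace ℝ (Fin m)), IsOpen Wt ∧
      Wt ∩ {y : EuclideanSpace ℝ (Fin m) | 0 ≤ y 0} = W)
    (φ ψ : EuclideanSpace ℝ (Fin m) → EuclideanSpace ℝ (Fin m))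
    (hφbij : Set.BijOn φ V W)
    (hinv₁ : ∀ y ∈ V, ψ (φ y) = y)
    (hinv₂ : ∀ z ∈ W, φ (ψ z) = z)
    (hφCk : ∃ (Vt : Set (EuclideanSpace ℝ (Fin m)))
        (φt : EuclideanSpace ℝ (Fin m) → EuclideanSpace ℝ (Fin m)),
      IsOpen Vt ∧ Vt ∩ {y : EuclideanSpace ℝ (Fin m) | 0 ≤ y 0} = V ∧
      ContDiffOn ℝ k φt Vt ∧ Set.EqOn φt φ V)
    (hψCk : ∃ (Wt : Set (EuclideanSpace ℝ (Fin m)))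
        (ψt : EuclideanSpace ℝ (Fin m) → EuclideanSpace ℝ (Fin m)),
      IsOpen Wt ∧ Wt ∩ {y : EuclideanSpace ℝ (Fin m) | 0 ≤ y 0} = W ∧
      ContDiffOn ℝ k ψt Wt ∧ Set.EqOn ψt ψ W) :
    -- (1) boundary points are mapped to boundary points
    (φ '' {y ∈ V | y 0 = 0} = {z ∈ W | z 0 = 0}) ∧
    -- (2) the derivative of any C^k extension maps the half-space into itself at boundary points
    (∀ (Vt : Set (EuclideanSpace ℝ (Fin m)))
        (φt : EuclideanSpace ℝ (Fin m) → EuclideanSpace ℝ (Fin m)),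
      IsOpen Vt → Vt ∩ {y : EuclideanSpace ℝ (Fin m) | 0 ≤ y 0} = V →
      ContDiffOn ℝ k φt Vt → Set.EqOn φt φ V →
      ∀ y ∈ V, y 0 = 0 →
        ∀ v : EuclideanSpace ℝ (Fin m), 0 ≤ v 0 → 0 ≤ (fderiv ℝ φt y v) 0) := by
  obtain ⟨Vt₀, φt₀, hVt₀, hVeq₀, hφt₀, hφeq₀⟩ := hφCk
  obtain ⟨Wt₀, ψt₀, hWt₀, hWeq₀, hψt₀, hψeq₀⟩ := hψCk
  have hψV : Set.MapsTo ψ W V := by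
    intro z hz
    obtain ⟨y, hy, rfl⟩ := hφbij.surjOn hz
    rw [hinv₁ y hy]; exact hy
  have hbdry : ∀ y ∈ V, y 0 = 0 → φ y 0 = 0 := fun y hy hy0 =>
    bdry_to_bdry hk hφbij.mapsTo hψV hinv₂ hVt₀ hVeq₀ hφt₀ hφeq₀
      hWt₀ hWeq₀ hψt₀ hψeq₀ hy hy0 (hinv₁ y hy)
  have hbdry' : ∀ z ∈ W, z 0 = 0 → ψ z 0 = 0 := fun z hz hz0 =>
    bdry_to_bdry hk hψV hφbij.mapsTo hinv₁ hWt₀ hWeq₀ hψt₀ hψeq₀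
      hVt₀ hVeq₀ hφt₀ hφeq₀ hz hz0 (hinv₂ z hz)
  constructor
  · ext z
    constructor
    · rintro ⟨y, ⟨hy, hy0⟩, rfl⟩
      exact ⟨hφbij.mapsTo hy, hbdry y hy hy0⟩
    · rintro ⟨hz, hz0⟩
      exact ⟨ψ z, ⟨hψV hz, hbdry' z hz hz0⟩, hinv₂ z hz⟩
  · intro Vt φt hVt hVeq hφt hφeq y hy hy0 v hv
    have hk' : (1 : WithTop ℕ∞) ≤ (k : WithTop ℕ∞) := by exact_mod_cast hk
    have hyVt : y ∈ Vt := by rw [← hVeq] at hy; exact hy.1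
    set c : ℝ → EuclideanSpace ℝ (Fin m) := fun t => y + t • v with hcdef
    have hc0 : c 0 = y := by simp [hcdef]
    have hccont : Continuous c := by continuity
    have hVtnh : ∀ᶠ t in 𝓝 (0:ℝ), c t ∈ Vt := by
      have h1 := hccont.tendsto 0
      rw [hc0] at h1
      exact h1.eventually (hVt.mem_nhds hyVt)
    have hd : HasDerivAt c v 0 := by
      have := ((hasDerivAt_id (0:ℝ)).smul_const v).const_add y
      simpa [hcdef] using this
    have hφd : HasFDerivAt φt (fderiv ℝ φt y) (c 0) := by
      rw [hc0]
      exact ((hφt.contDiffAt (hVt.mem_nhds hyVt)).differentiableAt (zero_lt_one.trans_le hk').ne').hasFDerivAt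
    have hgd : HasDerivAt (fun t => φt (c t)) (fderiv ℝ φt y v) 0 :=
      hφd.comp_hasDerivAt 0 hd
    have hG : HasDerivAt (fun t => φt (c t) 0) ((fderiv ℝ φt y v) 0) 0 := by
      have := ((EuclideanSpace.proj (0 : Fin m) :
        EuclideanSpace ℝ (Fin m) →L[ℝ] ℝ).hasFDerivAt).comp_hasDerivAt 0 hgd
      exact this
    have hG0 : φt (c 0) 0 = 0 := by
      rw [hc0, hφeq hy]
      exact hbdry y hy hy0
    have hpos : ∀ᶠ t in 𝓝[>] (0:ℝ), 0 ≤ φt (c t) 0 := by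
      filter_upwards [hVtnh.filter_mono nhdsWithin_le_nhds, self_mem_nhdsWithin]
        with t ht ht0
      have hct : c t 0 = t * v 0 := by
        simp [hcdef, PiLp.add_apply, PiLp.smul_apply, hy0]
      have hcH : (0:ℝ) ≤ c t 0 := by
        rw [hct]; exact mul_nonneg (le_of_lt ht0) hv
      have hcV : c t ∈ V := by rw [← hVeq]; exact ⟨ht, hcH⟩
      rw [hφeq hcV]
      have hw := hφbij.mapsTo hcV
      rw [← hWeq₀] at hw
      exact hw.2
    have hslope : Filter.Tendsto (slope (fun t => φt (c t) 0) 0) (𝓝[>] (0:ℝ))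
        (𝓝 ((fderiv ℝ φt y v) 0)) :=
      (hasDerivAt_iff_tendsto_slope.1 hG).mono_left
        (nhdsWithin_mono 0 (fun t ht => Set.mem_compl_singleton_iff.2 (ne_of_gt ht)))
    refine ge_of_tendsto hslope ?_
    filter_upwards [hpos, self_mem_nhdsWithin] with t ht ht0
    have : slope (fun t => φt (c t) 0) 0 t = (φt (c t) 0) / t := by
      rw [slope_def_field, hG0, sub_zero, sub_zero]
    rw [this]
    exact div_nonneg ht (le_of_lt ht0)
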